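/- For any positive integers n and k, the minimum number of rows m*(n,2) of a binary m×n matrix in which every set of at most 2 columns contains a row of weight exactly one equals ⌈log₂(n+1)⌉. -/

import Mathlib

/-- `M` is `d`-decodable: every nonempty set of at most `d` columns contains a
row of weight exactly one. -/
def IsDecodable {m n : ℕ} (M : Fin m → Fin n → Bool) (d : ℕ) : Prop :=
  ∀ S : Finset (Fin n), S.Nonempty → S.card ≤ d →
    ∃ i : Fin m, (S.filter (fun j => M i j = true)).card = 1

/-- `m*(n,d)`: the minimum number of rows of a `d`-decodable binary matrix with
`n` columns. -/
noncomputable def mStar (n d : ℕ) : ℕ :=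
  sInf {m | ∃ M : Fin m → Fin n → Bool, IsDecodable M d}

lemma exists_testBit_ne {x y m : ℕ} (hx : x < 2 ^ m) (hy : y < 2 ^ m) (hxy : x ≠ y) :
    ∃ i < m, x.testBit i ≠ y.testBit i := by
  by_contra h
  push_neg at h
  exact hxy (Nat.eq_of_testBit_eq fun i => by
    by_cases hi : i < m
    · exact h i hi
    · rw [Nat.testBit_eq_false_of_lt (lt_of_lt_of_le hx (Nat.pow_le_pow_right (by norm_num) (le_of_not_gt hi))),
        Nat.testBit_eq_false_of_lt (lt_of_lt_of_le hy (Nat.pow_le_pow_right (by norm_num) (le_of_not_gt hi)))])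

theorem mStar_two (n k : ℕ) (hn : 1 ≤ n) (hk : 1 ≤ k) :
    mStar n 2 = Nat.clog 2 (n + 1) := by
  set m := Nat.clog 2 (n + 1) with hm
  have hpow : n + 1 ≤ 2 ^ m := Nat.le_pow_clog (by norm_num) _
  -- construction
  have hub : m ∈ {m | ∃ M : Fin m → Fin n → Bool, IsDecodable M 2} := by
    refine ⟨fun i j => (j.val + 1).testBit i.val, ?_⟩
    intro S hS hcard
    have hpos := hS.card_pos
    have hlt : ∀ j : Fin n, j.val + 1 < 2 ^ m := fun j => lt_of_lt_of_le (by omega) hpow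
    interval_cases h : S.card
    · -- card 1
      obtain ⟨a, rfl⟩ := Finset.card_eq_one.mp h
      obtain ⟨i, hi, hbit⟩ := exists_testBit_ne (hlt a) (by positivity) (by omega)
      rw [Nat.zero_testBit] at hbit
      refine ⟨⟨i, hi⟩, ?_⟩
      simp [Finset.filter_singleton, Bool.ne_false_iff.mp hbit]
    · -- card 2
      obtain ⟨a, b, hab, rfl⟩ := Finset.card_eq_two.mp h
      obtain ⟨i, hi, hbit⟩ := exists_testBit_ne (hlt a) (hlt b)
        (by simpa using fun hq => hab (Fin.val_injective hq))
      refine ⟨⟨i, hi⟩, ?_⟩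
      rcases Bool.eq_false_or_eq_true ((a.val + 1).testBit i) with h1 | h1 <;>
        rcases Bool.eq_false_or_eq_true ((b.val + 1).testBit i) with h2 | h2 <;>
        simp [h1, h2] at hbit ⊢ <;>
        simp [Finset.filter_insert, Finset.filter_singleton, h1, h2, hab]
  refine le_antisymm (Nat.sInf_le hub) (le_csInf ⟨m, hub⟩ ?_)
  rintro p ⟨M, hM⟩
  rw [hm, Nat.clog_le_iff_le_pow (by norm_num)]
  -- injective map Option (Fin n) → (Fin p → Bool)
  have hinj : Function.Injective (fun o : Option (Fin n) =>
      o.elim (fun _ : Fin p => false) (fun j i => M i j)) := by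
    rintro (_ | a) (_ | b) hab
    · rfl
    · exfalso
      obtain ⟨i, hi⟩ := hM {b} ⟨b, Finset.mem_singleton_self b⟩ (by simp)
      rw [Finset.filter_singleton] at hi
      have h1 : M i b = true := by by_contra hc; simp [hc] at hi
      have h2 := congrFun hab i
      simp [h1] at h2
    · exfalso
      obtain ⟨i, hi⟩ := hM {a} ⟨a, Finset.mem_singleton_self a⟩ (by simp)
      rw [Finset.filter_singleton] at hi
      have h1 : M i a = true := by by_contra hc; simp [hc] at hi
      have h2 := congrFun hab i
      simp [h1] at h2
    · by_cases h : a = b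
      · rw [h]
      · exfalso
        obtain ⟨i, hi⟩ := hM {a, b} ⟨a, by simp⟩ ((Finset.card_insert_le _ _).trans (by simp))
        have heq : M i a = M i b := congrFun (by simpa using hab) i
        rcases Bool.eq_false_or_eq_true (M i a) with h1 | h1 <;>
          rw [Finset.filter_insert, Finset.filter_singleton] at hi <;>
          simp [h1, heq ▸ h1, h] at hi ⊢ <;> omega
  calc n + 1 = Fintype.card (Option (Fin n)) := by simp
    _ ≤ Fintype.card (Fin p → Bool) := Fintype.card_le_of_injective _ hinj
    _ = 2 ^ p := by simp
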